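/- In a finite game graph with a Richman function x, suppose White plays an x-greedy strategy (always moving to a White option maximizing x) in the random-turn game where each move is made by White or Black with probability 1/2 independently, with terminal positions absorbing. Then for every n, the expected value E[x(P_n)] of x at the position after n moves satisfies E[x(P_n)] ≥ x(P_0), regardless of Black's strategy. In particular, the probability that Black has won (reached a terminal position of value 0) within n moves is at most 1 − x(P_0). -/

import Mathlib

open Finset

/-- A finite game graph: each non-terminal position has nonempty finite sets of
White and Black options; terminal positions carry a value 0 (Black win) or 1 (White win). -/
structure GameGraph (P : Type) [Fintype P] [DecidableEq P] where
  terminal : P → Bool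
  tval : P → ℝ
  tval01 : ∀ p, terminal p = true → tval p = 0 ∨ tval p = 1
  W : P → Finset P
  B : P → Finset P
  Wne : ∀ p, terminal p = false → (W p).Nonempty
  Bne : ∀ p, terminal p = false → (B p).Nonempty

variable {P : Type} [Fintype P] [DecidableEq P]

/-- The thresholds `α_n`, with base value 0 at non-terminal positions. -/
noncomputable def GameGraph.alpha (G : GameGraph P) : ℕ → P → ℝ
  | 0, p => if G.terminal p then G.tval p else 0
  | n+1, p =>
    if h : G.terminal p = true then G.tval p
    else ((G.W p).sup' (G.Wne p (by simpa using h)) (G.alpha n)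
        + (G.B p).inf' (G.Bne p (by simpa using h)) (G.alpha n)) / 2

/-- The thresholds `β_n`, with base value 1 at non-terminal positions. -/
noncomputable def GameGraph.beta (G : GameGraph P) : ℕ → P → ℝ
  | 0, p => if G.terminal p then G.tval p else 1
  | n+1, p =>
    if h : G.terminal p = true then G.tval p
    else ((G.W p).sup' (G.Wne p (by simpa using h)) (G.beta n)
        + (G.B p).inf' (G.Bne p (by simpa using h)) (G.beta n)) / 2

noncomputable def GameGraph.alphaLim (G : GameGraph P) (p : P) : ℝ := ⨆ n, G.alpha n p

noncomputable def GameGraph.betaLim (G : GameGraph P) (p : P) : ℝ := ⨅ n, G.beta n p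

/-- A Richman function: values in `[0,1]`, prescribed terminal values, and the
averaging equation at non-terminal positions. -/
def GameGraph.IsRichman (G : GameGraph P) (x : P → ℝ) : Prop :=
  (∀ p, 0 ≤ x p ∧ x p ≤ 1) ∧
  (∀ p, G.terminal p = true → x p = G.tval p) ∧
  (∀ p, ∀ h : G.terminal p = false,
    x p = ((G.W p).sup' (G.Wne p h) x + (G.B p).inf' (G.Bne p h) x) / 2)

open MeasureTheory ProbabilityTheory

section Helpers

variable {Ω : Type} [MeasurableSpace Ω] {μ : Measure Ω} [IsProbabilityMeasure μ]
  {C : ℕ → Ω → Bool}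

lemma coin_half (hCmeas : ∀ n, Measurable (C n)) (hCfair : ∀ n, μ (C n ⁻¹' {true}) = 1 / 2)
    (n : ℕ) (b : Bool) : μ (C n ⁻¹' {b}) = 1 / 2 := by
  cases b with
  | true => exact hCfair n
  | false =>
    have h : C n ⁻¹' {false} = (C n ⁻¹' {true})ᶜ := by
      ext ω; simp
    rw [h, measure_compl ((hCmeas n) (measurableSet_singleton true)) (measure_ne_top μ _),
      measure_univ, hCfair, one_div, ENNReal.one_sub_inv_two]

/-- the atom of coin outcomes determined by a prefix of coin values -/
def coinAtom (C : ℕ → Ω → Bool) (n : ℕ) (s : Fin n → Bool) : Set Ω :=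
  {ω | ∀ i : Fin n, C i ω = s i}

lemma coinAtom_measurableSet (hCmeas : ∀ n, Measurable (C n)) (n : ℕ) (s : Fin n → Bool) :
    MeasurableSet (coinAtom C n s) := by
  have h : coinAtom C n s = ⋂ i : Fin n, C i ⁻¹' {s i} := by
    ext ω; simp [coinAtom]
  rw [h]
  exact MeasurableSet.iInter fun i => (hCmeas i) (measurableSet_singleton _)

lemma coinAtom_measure (hCmeas : ∀ n, Measurable (C n))
    (hCindep : iIndepFun C μ)
    (hCfair : ∀ n, μ (C n ⁻¹' {true}) = 1 / 2) (n : ℕ) (s : Fin n → Bool) :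
    μ (coinAtom C n s) = (1 / 2) ^ n := by
  classical
  set s' : ℕ → Bool := fun i => if h : i < n then s ⟨i, h⟩ else true with hs'
  have h1 : coinAtom C n s = ⋂ i ∈ Finset.range n, C i ⁻¹' {s' i} := by
    ext ω
    simp only [coinAtom, Set.mem_setOf_eq, Set.mem_iInter, Finset.mem_range, Set.mem_preimage,
      Set.mem_singleton_iff]
    constructor
    · intro h i hi; simpa [s', hi] using h ⟨i, hi⟩
    · intro h i; simpa [s', i.isLt] using h i i.isLt
  rw [h1, hCindep.meas_biInter (fun i _ => ⟨{s' i}, measurableSet_singleton _, rfl⟩)]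
  rw [Finset.prod_congr rfl fun i _ => coin_half hCmeas hCfair i (s' i)]
  simp

lemma coinAtom_nonempty (hCmeas : ∀ n, Measurable (C n))
    (hCindep : iIndepFun C μ)
    (hCfair : ∀ n, μ (C n ⁻¹' {true}) = 1 / 2) (n : ℕ) (s : Fin n → Bool) :
    (coinAtom C n s).Nonempty := by
  rw [Set.nonempty_iff_ne_empty]
  intro h
  have hm := coinAtom_measure hCmeas hCindep hCfair n s
  rw [h, measure_empty] at hm
  exact (pow_ne_zero n (by norm_num : (1 / 2 : ENNReal) ≠ 0)) hm.symm

lemma integral_adapted (hCmeas : ∀ n, Measurable (C n))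
    (hCindep : iIndepFun C μ)
    (hCfair : ∀ n, μ (C n ⁻¹' {true}) = 1 / 2) (n : ℕ) (F : (Fin n → Bool) → ℝ) :
    ∫ ω, F (fun i => C i ω) ∂μ = ∑ s : Fin n → Bool, F s * (1 / 2) ^ n := by
  have hpt : ∀ ω, F (fun i => C i ω) =
      ∑ s : Fin n → Bool, (coinAtom C n s).indicator (fun _ => F s) ω := by
    intro ω
    rw [Finset.sum_eq_single (fun i : Fin n => C i ω)]
    · rw [Set.indicator_of_mem]
      intro i; rfl
    · intro s _ hs
      apply Set.indicator_of_notMem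
      intro hmem
      exact hs (funext fun i => (hmem i).symm)
    · simp
  rw [integral_congr_ae (Filter.Eventually.of_forall hpt), integral_finset_sum]
  · refine Finset.sum_congr rfl fun s _ => ?_
    rw [integral_indicator_const _ (coinAtom_measurableSet hCmeas n s), measureReal_def,
      coinAtom_measure hCmeas hCindep hCfair n s, smul_eq_mul, mul_comm]
    congr 1
    simp [ENNReal.toReal_pow]
  · intro s _
    exact (integrable_const (F s)).indicator (coinAtom_measurableSet hCmeas n s)

lemma sup'_eqset {α β : Type*} [SemilatticeSup β] {s t : Finset α} (h : s = t)
    (hs : s.Nonempty) (ht : t.Nonempty) (f : α → β) : s.sup' hs f = t.sup' ht f := by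
  subst h; rfl

lemma inf'_eqset {α β : Type*} [SemilatticeInf β] {s t : Finset α} (h : s = t)
    (hs : s.Nonempty) (ht : t.Nonempty) (f : α → β) : s.inf' hs f = t.inf' ht f := by
  subst h; rfl

lemma snoc_bijective {n : ℕ} :
    Function.Bijective (fun p : (Fin n → Bool) × Bool => (Fin.snoc p.1 p.2 : Fin (n+1) → Bool)) := by
  constructor
  · rintro ⟨t, b⟩ ⟨t', b'⟩ h
    simp only [Prod.mk.injEq]
    constructor
    · funext i
      have := congrFun h i.castSucc
      simpa [Fin.snoc_castSucc] using this
    · have := congrFun h (Fin.last n)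
      simpa [Fin.snoc_last] using this
  · intro s
    exact ⟨⟨Fin.init s, s (Fin.last n)⟩, Fin.snoc_init_self s⟩

end Helpers

/-- in random-turn play where White plays `x`-greedily (for a
Richman function `x`), moves are decided by i.i.d. fair coins, and terminal
positions are absorbing, the expectation `E[x(P_n)]` is at least `x(P_0)` for
every `n`, regardless of Black's strategy; in particular the probability that
Black has won within `n` moves is at most `1 − x(P_0)`. -/
theorem greedy_submartingale (G : GameGraph P) (x : P → ℝ) (hx : G.IsRichman x)
    {Ω : Type} [MeasurableSpace Ω] (μ : Measure Ω) [IsProbabilityMeasure μ]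
    (C : ℕ → Ω → Bool) (hCmeas : ∀ n, Measurable (C n))
    (hCindep : iIndepFun C μ)
    (hCfair : ∀ n, μ (C n ⁻¹' {true}) = 1 / 2)
    (Pos : ℕ → Ω → P) (p0 : P) (hPos0 : ∀ ω, Pos 0 ω = p0)
    (hAdapted : ∀ n, ∃ f : (Fin n → Bool) → P, ∀ ω, Pos n ω = f fun i => C i ω)
    (habs : ∀ n ω, G.terminal (Pos n ω) = true → Pos (n + 1) ω = Pos n ω)
    (hWgreedy : ∀ n ω, ∀ h : G.terminal (Pos n ω) = false, C n ω = true →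
      Pos (n + 1) ω ∈ G.W (Pos n ω) ∧
      x (Pos (n + 1) ω) = (G.W (Pos n ω)).sup' (G.Wne _ h) x)
    (hBmove : ∀ n ω, G.terminal (Pos n ω) = false → C n ω = false →
      Pos (n + 1) ω ∈ G.B (Pos n ω)) :
    (∀ n, x p0 ≤ ∫ ω, x (Pos n ω) ∂μ) ∧
    (∀ n, μ {ω | G.terminal (Pos n ω) = true ∧ G.tval (Pos n ω) = 0}
        ≤ ENNReal.ofReal (1 - x p0)) := by
  classical
  obtain ⟨hx01, hxterm, hxavg⟩ := hx
  -- expectation formula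
  have key : ∀ n (f : (Fin n → Bool) → P), (∀ ω, Pos n ω = f fun i => C i ω) →
      ∫ ω, x (Pos n ω) ∂μ = ∑ s : Fin n → Bool, x (f s) * (1 / 2) ^ n := by
    intro n f hf
    have h1 : ∫ ω, x (Pos n ω) ∂μ = ∫ ω, x (f fun i => C i ω) ∂μ := by
      refine integral_congr_ae (Filter.Eventually.of_forall fun ω => ?_)
      simp only [hf]
    rw [h1]
    exact integral_adapted hCmeas hCindep hCfair n (fun s => x (f s))
  -- the key per-atom facts
  have atomPos : ∀ n (f : (Fin n → Bool) → P), (∀ ω, Pos n ω = f fun i => C i ω) →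
      ∀ (s : Fin n → Bool) (ω : Ω), ω ∈ coinAtom C n s → Pos n ω = f s := by
    intro n f hf s ω hω
    rw [hf ω]
    congr 1
    exact funext fun i => hω i
  -- the submartingale step
  have step : ∀ n, ∫ ω, x (Pos n ω) ∂μ ≤ ∫ ω, x (Pos (n + 1) ω) ∂μ := by
    intro n
    obtain ⟨f, hf⟩ := hAdapted n
    obtain ⟨g, hg⟩ := hAdapted (n + 1)
    rw [key n f hf, key (n + 1) g hg]
    rw [← Fintype.sum_bijective _ (snoc_bijective (n := n))
      (fun p : (Fin n → Bool) × Bool => x (g (Fin.snoc p.1 p.2)) * (1 / 2) ^ (n + 1))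
      (fun s => x (g s) * (1 / 2) ^ (n + 1)) (fun p => rfl)]
    rw [Fintype.sum_prod_type]
    refine Finset.sum_le_sum fun t _ => ?_
    rw [Fintype.sum_bool]
    -- pick sample points in the two atoms
    obtain ⟨ωT, hωT⟩ := coinAtom_nonempty hCmeas hCindep hCfair (n + 1) (Fin.snoc t true)
    obtain ⟨ωF, hωF⟩ := coinAtom_nonempty hCmeas hCindep hCfair (n + 1) (Fin.snoc t false)
    have hpre : ∀ (b : Bool) (ω : Ω), ω ∈ coinAtom C (n + 1) (Fin.snoc t b) →
        Pos n ω = f t ∧ C n ω = b ∧ Pos (n + 1) ω = g (Fin.snoc t b) := by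
      intro b ω hω
      refine ⟨?_, ?_, atomPos (n + 1) g hg _ ω hω⟩
      · rw [hf ω]
        congr 1
        funext i
        have h1 := hω i.castSucc
        simpa [Fin.snoc_castSucc] using h1
      · have h1 := hω (Fin.last n)
        simpa [Fin.snoc_last] using h1
    obtain ⟨hT1, hT2, hT3⟩ := hpre true ωT hωT
    obtain ⟨hF1, hF2, hF3⟩ := hpre false ωF hωF
    have hhalf : (0:ℝ) < (1 / 2 : ℝ) ^ n := by positivity
    have main : 2 * x (f t) ≤ x (g (Fin.snoc t true)) + x (g (Fin.snoc t false)) := by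
      rcases hterm : G.terminal (f t) with hfalse | htrue
      · -- non-terminal
        have hTrm : G.terminal (Pos n ωT) = false := by rw [hT1]; exact hterm
        have hFrm : G.terminal (Pos n ωF) = false := by rw [hF1]; exact hterm
        have hW := hWgreedy n ωT hTrm hT2
        have hsup : x (Pos (n + 1) ωT) = (G.W (f t)).sup' (G.Wne _ hterm) x := by
          rw [hW.2]
          exact sup'_eqset (by rw [hT1]) _ _ x
        have hB := hBmove n ωF hFrm hF2
        rw [hF1] at hB
        have hinf : (G.B (f t)).inf' (G.Bne _ hterm) x ≤ x (Pos (n + 1) ωF) :=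
          Finset.inf'_le x hB
        have havg := hxavg (f t) hterm
        rw [← hT3, ← hF3, hsup]
        linarith
      · -- terminal: absorbing
        have e1 : Pos (n + 1) ωT = f t := by
          rw [habs n ωT (by rw [hT1]; exact hterm), hT1]
        have e2 : Pos (n + 1) ωF = f t := by
          rw [habs n ωF (by rw [hF1]; exact hterm), hF1]
        rw [← hT3, ← hF3, e1, e2]
        linarith
    have hp : ((1:ℝ) / 2) ^ (n + 1) = (1 / 2) ^ n / 2 := by ring
    rw [hp]
    nlinarith [main, hhalf]
  -- part 1
  have part1 : ∀ n, x p0 ≤ ∫ ω, x (Pos n ω) ∂μ := by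
    intro n
    induction n with
    | zero =>
      have : ∫ ω, x (Pos 0 ω) ∂μ = x p0 := by
        simp only [hPos0, integral_const, measureReal_def, measure_univ, ENNReal.toReal_one, one_smul]
      rw [this]
    | succ n ih => exact ih.trans (step n)
  refine ⟨part1, fun n => ?_⟩
  -- part 2
  obtain ⟨f, hf⟩ := hAdapted n
  set S : Finset (Fin n → Bool) :=
    Finset.univ.filter (fun s => G.terminal (f s) = true ∧ G.tval (f s) = 0) with hS
  have hA : {ω | G.terminal (Pos n ω) = true ∧ G.tval (Pos n ω) = 0}
      = ⋃ s ∈ S, coinAtom C n s := by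
    ext ω
    simp only [Set.mem_setOf_eq, Set.mem_iUnion, hS, Finset.mem_filter, Finset.mem_univ,
      true_and]
    constructor
    · intro h
      refine ⟨fun i => C i ω, ?_, fun i => rfl⟩
      rwa [← hf ω]
    · rintro ⟨s, hs, hω⟩
      rwa [atomPos n f hf s ω hω]
  have hdisj : (S : Set (Fin n → Bool)).PairwiseDisjoint (coinAtom C n) := by
    intro s _ s' _ hss'
    refine Set.disjoint_left.2 fun ω hω hω' => hss' ?_
    exact funext fun i => (hω i).symm.trans (hω' i)
  have hμA : μ {ω | G.terminal (Pos n ω) = true ∧ G.tval (Pos n ω) = 0}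
      = S.card * (1 / 2 : ENNReal) ^ n := by
    rw [hA, measure_biUnion_finset hdisj (fun s _ => coinAtom_measurableSet hCmeas n s)]
    rw [Finset.sum_congr rfl fun s _ => coinAtom_measure hCmeas hCindep hCfair n s]
    simp [mul_comm]
  -- the real inequality
  have hsum := (part1 n).trans_eq (key n f hf)
  have hsplit : ∑ s : Fin n → Bool, x (f s) * (1 / 2) ^ n
      = ∑ s ∈ S, x (f s) * (1 / 2) ^ n
        + ∑ s ∈ Finset.univ.filter
            (fun s => ¬(G.terminal (f s) = true ∧ G.tval (f s) = 0)), x (f s) * (1 / 2) ^ n := by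
    rw [hS]
    exact (Finset.sum_filter_add_sum_filter_not Finset.univ _ _).symm
  have hzero : ∀ s ∈ S, x (f s) * (1 / 2 : ℝ) ^ n = 0 := by
    intro s hs
    rw [hS, Finset.mem_filter] at hs
    rw [hxterm (f s) hs.2.1, hs.2.2, zero_mul]
  have hbound : ∑ s ∈ Finset.univ.filter
      (fun s => ¬(G.terminal (f s) = true ∧ G.tval (f s) = 0)), x (f s) * (1 / 2 : ℝ) ^ n
      ≤ (Finset.univ.filter
        (fun s => ¬(G.terminal (f s) = true ∧ G.tval (f s) = 0))).card * (1 / 2) ^ n := by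
    calc _ ≤ ∑ _s ∈ Finset.univ.filter
          (fun s => ¬(G.terminal (f s) = true ∧ G.tval (f s) = 0)), (1:ℝ) * (1 / 2) ^ n := by
          refine Finset.sum_le_sum fun s _ => ?_
          have h01 := hx01 (f s)
          have : (0:ℝ) < (1 / 2 : ℝ) ^ n := by positivity
          nlinarith
      _ = _ := by rw [Finset.sum_const, nsmul_eq_mul, one_mul]
  have hcard : (Finset.univ.filter
      (fun s => ¬(G.terminal (f s) = true ∧ G.tval (f s) = 0))).card = 2 ^ n - S.card := by
    have hcu : Fintype.card (Fin n → Bool) = 2 ^ n := by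
      simp [Fintype.card_fun]
    have h := Finset.card_filter_add_card_filter_not
      (s := (Finset.univ : Finset (Fin n → Bool)))
      (p := fun s => G.terminal (f s) = true ∧ G.tval (f s) = 0)
    rw [Finset.card_univ, hcu] at h
    rw [hS]
    omega
  have hSle : S.card ≤ 2 ^ n := by
    calc S.card ≤ Fintype.card (Fin n → Bool) := Finset.card_le_univ S
      _ = 2 ^ n := by simp [Fintype.card_fun]
  have hreal : (S.card : ℝ) * (1 / 2) ^ n ≤ 1 - x p0 := by
    have h2 : ((2:ℝ) ^ n - S.card) * (1 / 2) ^ n = 1 - S.card * (1 / 2) ^ n := by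
      have : (2:ℝ) ^ n * (1 / 2) ^ n = 1 := by
        rw [← mul_pow]
        norm_num
      nlinarith
    have hc : ((Finset.univ.filter
        (fun s => ¬(G.terminal (f s) = true ∧ G.tval (f s) = 0))).card : ℝ)
        = (2:ℝ) ^ n - S.card := by
      rw [hcard]
      push_cast [Nat.cast_sub hSle]
      ring
    rw [Finset.sum_congr rfl hzero, Finset.sum_const, smul_zero, zero_add] at hsplit
    rw [hsplit] at hsum
    rw [hc, h2] at hbound
    linarith [hsum.trans hbound]
  rw [hμA]
  have henn : (S.card : ENNReal) * (1 / 2) ^ n = ENNReal.ofReal ((S.card : ℝ) * (1 / 2) ^ n) := by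
    rw [ENNReal.ofReal_mul (by positivity), ENNReal.ofReal_natCast, ENNReal.ofReal_pow (by norm_num)]
    norm_num
    rw [one_div, ENNReal.ofReal_inv_of_pos (by norm_num), ENNReal.ofReal_ofNat]
  rw [henn]
  exact ENNReal.ofReal_le_ofReal hreal
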